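/- Let (W, S) be a Coxeter system with length function ℓ, and let σ be a group automorphism of W with σ(S) = S (hence ℓ(σ(w)) = ℓ(w) for all w ∈ W). If w ∈ W is σ-straight, then w has minimal length in its σ-conjugacy class: for every x ∈ W, ℓ(x w σ(x)⁻¹) ≥ ℓ(w). -/

import Mathlib

/-- For an automorphism `σ` of a group `W` and `w ∈ W`, the twisted product
`g_m(w) = w · σ(w) · σ²(w) ⋯ σ^{m−1}(w)`. -/
def twistProd {W : Type*} [Group W] (σ : W → W) (w : W) (m : ℕ) : W :=
  ((List.range m).map fun i => σ^[i] w).prod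

private lemma length_map_le {B W : Type*} [Group W] {M : CoxeterMatrix B}
    (cs : CoxeterSystem M W) (σ : W ≃* W)
    (h : ⇑σ '' Set.range cs.simple ⊆ Set.range cs.simple) (w : W) :
    cs.length (σ w) ≤ cs.length w := by
  obtain ⟨ω, hlen, rfl⟩ := cs.exists_reduced_word w
  have hf : ∀ i : B, ∃ j : B, σ (cs.simple i) = cs.simple j := by
    intro i
    have : σ (cs.simple i) ∈ Set.range cs.simple := h ⟨cs.simple i, ⟨i, rfl⟩, rfl⟩
    obtain ⟨j, hj⟩ := this
    exact ⟨j, hj.symm⟩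
  choose f hfspec using hf
  have key : σ (cs.wordProd ω) = cs.wordProd (ω.map f) := by
    unfold CoxeterSystem.wordProd
    rw [map_list_prod σ, List.map_map, List.map_map]
    congr 1
    exact List.map_congr_left fun i _ => hfspec i
  rw [key]
  calc cs.length (cs.wordProd (ω.map f)) ≤ (ω.map f).length := cs.length_wordProd_le _
    _ = ω.length := List.length_map _
    _ = cs.length (cs.wordProd ω) := hlen.eq.symm

private lemma length_map_eq {B W : Type*} [Group W] {M : CoxeterMatrix B}
    (cs : CoxeterSystem M W) (σ : W ≃* W)
    (hσS : ⇑σ '' Set.range cs.simple = Set.range cs.simple) (w : W) :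
    cs.length (σ w) = cs.length w := by
  refine le_antisymm (length_map_le cs σ hσS.le w) ?_
  have h2 : ⇑σ.symm '' Set.range cs.simple ⊆ Set.range cs.simple := by
    intro y ⟨x, hx, hxy⟩
    rw [← hσS] at hx
    obtain ⟨z, hz, hzx⟩ := hx
    rw [← hxy, ← hzx]; simpa using hz
  have := length_map_le cs σ.symm h2 (σ w)
  simpa using this

private lemma length_iterate_eq {B W : Type*} [Group W] {M : CoxeterMatrix B}
    (cs : CoxeterSystem M W) (σ : W ≃* W)
    (hσS : ⇑σ '' Set.range cs.simple = Set.range cs.simple) (w : W) (n : ℕ) :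
    cs.length ((⇑σ)^[n] w) = cs.length w := by
  induction n with
  | zero => rfl
  | succ n ih =>
    rw [Function.iterate_succ_apply', length_map_eq cs σ hσS, ih]

private lemma twistProd_succ {W : Type*} [Group W] (σ : W → W) (w : W) (m : ℕ) :
    twistProd σ w (m + 1) = twistProd σ w m * σ^[m] w := by
  unfold twistProd
  rw [List.range_succ, List.map_append, List.prod_append]
  simp

private lemma length_twistProd_le {B W : Type*} [Group W] {M : CoxeterMatrix B}
    (cs : CoxeterSystem M W) (σ : W ≃* W)
    (hσS : ⇑σ '' Set.range cs.simple = Set.range cs.simple) (w : W) (m : ℕ) :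
    cs.length (twistProd σ w m) ≤ m * cs.length w := by
  induction m with
  | zero => simp [twistProd]
  | succ m ih =>
    rw [twistProd_succ]
    calc cs.length (twistProd (⇑σ) w m * (⇑σ)^[m] w)
        ≤ cs.length (twistProd (⇑σ) w m) + cs.length ((⇑σ)^[m] w) := cs.length_mul_le _ _
      _ ≤ m * cs.length w + cs.length w := by
          rw [length_iterate_eq cs σ hσS]; omega
      _ = (m + 1) * cs.length w := by ring

private lemma iterate_conj {W : Type*} [Group W] (σ : W ≃* W) (w x : W) (m : ℕ) :
    (⇑σ)^[m] (x * w * (σ x)⁻¹)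
      = (⇑σ)^[m] x * (⇑σ)^[m] w * ((⇑σ)^[m + 1] x)⁻¹ := by
  rw [Function.iterate_succ_apply]
  induction m with
  | zero => simp
  | succ m ih2 =>
    rw [Function.iterate_succ_apply', Function.iterate_succ_apply',
      Function.iterate_succ_apply', Function.iterate_succ_apply', ih2]
    simp [map_mul]

private lemma twistProd_conj {W : Type*} [Group W] (σ : W ≃* W) (w x : W) (m : ℕ) :
    twistProd σ (x * w * (σ x)⁻¹) m = x * twistProd σ w m * ((⇑σ)^[m] x)⁻¹ := by
  induction m with
  | zero => simp [twistProd]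
  | succ m ih =>
    rw [twistProd_succ, twistProd_succ, ih, iterate_conj]
    group

/-- If `(W, S)` is a Coxeter system, `σ` an automorphism of `W` with `σ(S) = S`,
and `w ∈ W` is `σ`-straight, then `w` has minimal length in its `σ`-conjugacy class:
`ℓ(x w σ(x)⁻¹) ≥ ℓ(w)` for all `x`. -/
theorem straight_minimal_length {B W : Type*} [Group W] {M : CoxeterMatrix B}
    (cs : CoxeterSystem M W) (σ : W ≃* W)
    (hσS : ⇑σ '' Set.range cs.simple = Set.range cs.simple)
    (w : W)
    (hw : ∀ m : ℕ, 1 ≤ m → cs.length (twistProd σ w m) = m * cs.length w) :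
    ∀ x : W, cs.length w ≤ cs.length (x * w * (σ x)⁻¹) := by
  intro x
  set w' := x * w * (σ x)⁻¹ with hw'
  -- key inequality: for all m ≥ 1, m * ℓ w ≤ m * ℓ w' + 2 * ℓ x
  have key : ∀ m : ℕ, 1 ≤ m → m * cs.length w ≤ m * cs.length w' + 2 * cs.length x := by
    intro m hm
    have h1 : twistProd σ w m = x⁻¹ * twistProd σ w' m * (⇑σ)^[m] x := by
      rw [hw', twistProd_conj]
      group
    calc m * cs.length w = cs.length (twistProd σ w m) := (hw m hm).symm
      _ = cs.length (x⁻¹ * twistProd σ w' m * (⇑σ)^[m] x) := by rw [h1]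
      _ ≤ cs.length (x⁻¹ * twistProd σ w' m) + cs.length ((⇑σ)^[m] x) := cs.length_mul_le _ _
      _ ≤ cs.length x⁻¹ + cs.length (twistProd σ w' m) + cs.length ((⇑σ)^[m] x) := by
          have := cs.length_mul_le x⁻¹ (twistProd σ w' m); omega
      _ ≤ cs.length x + m * cs.length w' + cs.length x := by
          rw [cs.length_inv, length_iterate_eq cs σ hσS]
          have := length_twistProd_le cs σ hσS w' m
          omega
      _ = m * cs.length w' + 2 * cs.length x := by ring
  by_contra h
  push_neg at h
  have hm := key (2 * cs.length x + 1) (by omega)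
  nlinarith [h]
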